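/- The decomposition of an asymptotically ℤ-almost automorphic function is unique: ℤAAA(ℝ⁺; X) = ℤAA(ℝ; X) ⊕ ℤC₀(ℝ⁺; X), i.e., if g₁ + h₁ = g₂ + h₂ on ℝ⁺ with g_i ∈ ℤAA(ℝ; X) and h_i ∈ ℤC₀(ℝ⁺; X), then g₁ = g₂ on ℝ and h₁ = h₂ on ℝ⁺. -/

import Mathlib

open Filter Topology

variable {X : Type*} [NormedAddCommGroup X]

/-- `f ∈ PC_ℤ(ℝ; X)`: continuous on each `[n, n+1)`, `n ∈ ℤ`, with a left
limit at each integer. -/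
def PCZ (f : ℝ → X) : Prop :=
  (∀ n : ℤ, ContinuousOn f (Set.Ico (n : ℝ) ((n : ℝ) + 1))) ∧
  ∀ n : ℤ, ∃ L : X, Filter.Tendsto f (nhdsWithin (n : ℝ) (Set.Iio (n : ℝ))) (nhds L)

/-- `f` is ℤ-almost automorphic: `f ∈ PC_ℤ(ℝ;X)` and for every sequence of
integers there are a subsequence and a function `g` with the pointwise
bi-limit property. -/
def ZAA (f : ℝ → X) : Prop :=
  PCZ f ∧ ∀ s : ℕ → ℤ, ∃ (φ : ℕ → ℕ) (g : ℝ → X), StrictMono φ ∧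
    (∀ t : ℝ, Filter.Tendsto (fun n => f (t + (s (φ n) : ℝ))) Filter.atTop (nhds (g t))) ∧
    (∀ t : ℝ, Filter.Tendsto (fun n => g (t - (s (φ n) : ℝ))) Filter.atTop (nhds (f t)))

/-- `h ∈ ℤC₀(ℝ⁺;X)`: piecewise continuous on `[n, n+1)` for natural `n`, with
left limits at positive integers, and `h(t) → 0` as `t → ∞`. -/
def ZC0 (h : ℝ → X) : Prop :=
  (∀ n : ℕ, ContinuousOn h (Set.Ico (n : ℝ) ((n : ℝ) + 1))) ∧
  (∀ n : ℕ, 0 < n → ∃ L : X, Filter.Tendsto h (nhdsWithin (n : ℝ) (Set.Iio (n : ℝ))) (nhds L)) ∧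
  Filter.Tendsto h Filter.atTop (nhds 0)

/-- Uniqueness of the decomposition of asymptotically ℤ-almost automorphic
functions: `ℤAAA(ℝ⁺;X) = ℤAA(ℝ;X) ⊕ ℤC₀(ℝ⁺;X)`. -/
theorem stmt10 (g₁ g₂ h₁ h₂ : ℝ → X)
    (hg₁ : ZAA g₁) (hg₂ : ZAA g₂) (hh₁ : ZC0 h₁) (hh₂ : ZC0 h₂)
    (heq : ∀ t : ℝ, 0 ≤ t → g₁ t + h₁ t = g₂ t + h₂ t) :
    (∀ t : ℝ, g₁ t = g₂ t) ∧ (∀ t : ℝ, 0 ≤ t → h₁ t = h₂ t) := by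
  obtain ⟨φ₁, G₁, hφ₁, hA₁, hB₁⟩ := hg₁.2 (fun n => (n : ℤ))
  obtain ⟨φ₂, G₂, hφ₂, hA₂, hB₂⟩ := hg₂.2 (fun n => ((φ₁ n : ℕ) : ℤ))
  -- the shifts c n → ∞
  set c : ℕ → ℝ := fun n => ((φ₁ (φ₂ n) : ℕ) : ℝ) with hc
  have hctop : Tendsto c atTop atTop := by
    apply tendsto_natCast_atTop_atTop.comp
    exact (hφ₁.comp hφ₂).tendsto_atTop
  -- the "difference" function tends to 0 at infinity
  have hdiff : Tendsto (fun x => g₁ x - g₂ x) atTop (nhds 0) := by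
    have h0 : Tendsto (fun x => h₂ x - h₁ x) atTop (nhds (0 - 0)) :=
      hh₂.2.2.sub hh₁.2.2
    rw [sub_zero] at h0
    refine h0.congr' ?_
    filter_upwards [eventually_ge_atTop (0 : ℝ)] with x hx
    have h := heq x hx
    rw [sub_eq_sub_iff_add_eq_add, add_comm, ← h, add_comm]
  -- convergence of g₁ along the combined subsequence
  have hA₁' : ∀ t : ℝ, Tendsto (fun n => g₁ (t + c n)) atTop (nhds (G₁ t)) := by
    intro t
    have := (hA₁ t).comp hφ₂.tendsto_atTop
    simpa [Function.comp_def] using this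
  have hB₁' : ∀ t : ℝ, Tendsto (fun n => G₁ (t - c n)) atTop (nhds (g₁ t)) := by
    intro t
    have := (hB₁ t).comp hφ₂.tendsto_atTop
    simpa [Function.comp_def] using this
  have hA₂' : ∀ t : ℝ, Tendsto (fun n => g₂ (t + c n)) atTop (nhds (G₂ t)) := by
    intro t; simpa using hA₂ t
  have hB₂' : ∀ t : ℝ, Tendsto (fun n => G₂ (t - c n)) atTop (nhds (g₂ t)) := by
    intro t; simpa using hB₂ t
  -- G₁ = G₂
  have hG : ∀ t : ℝ, G₁ t = G₂ t := by
    intro t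
    have h1 : Tendsto (fun n => g₁ (t + c n) - g₂ (t + c n)) atTop
        (nhds (G₁ t - G₂ t)) := (hA₁' t).sub (hA₂' t)
    have h2 : Tendsto (fun n => g₁ (t + c n) - g₂ (t + c n)) atTop (nhds 0) := by
      have : Tendsto (fun n => t + c n) atTop atTop :=
        tendsto_atTop_add_const_left _ t hctop
      exact hdiff.comp this
    exact sub_eq_zero.mp (tendsto_nhds_unique h1 h2)
  have hg : ∀ t : ℝ, g₁ t = g₂ t := by
    intro t
    have h1 : Tendsto (fun n => G₁ (t - c n)) atTop (nhds (g₂ t)) := by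
      refine (hB₂' t).congr fun n => ?_
      rw [hG]
    exact tendsto_nhds_unique (hB₁' t) h1
  refine ⟨hg, fun t ht => ?_⟩
  have := heq t ht
  rw [hg t] at this
  exact add_left_cancel this
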